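/- arXiv:math/0509702 — 2 statements merged into one kernel-verified Lean document; each statement's English description precedes it below -/
import Mathlib

section
/- Let Ω ⊂ ℝ^d be a bounded measurable set, (z_n) a sequence of measurable functions Ω → ℝ^k with (|z_n|²) uniformly integrable and ‖z_n‖_{L²} bounded, and let α_n > 0 with α_n → 0 and sup_n ‖α_n z_n‖_{L^∞} ≤ R < ∞. Let U : ℝ^k → ℝ be continuous with U(0) = 0. Then ∫_Ω |U(α_n z_n(x))| |z_n(x)|² dx → 0 as n → ∞. -/
open MeasureTheory Filter

set_option maxHeartbeats 1000000

/-- If `(|z_n|²)` is uniformly integrable and bounded in `L¹`,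
`α_n → 0` with `‖α_n z_n‖_{L^∞} ≤ R`, and `U` is continuous with `U(0) = 0`,
then `∫_Ω |U(α_n z_n)| |z_n|² dx → 0`. -/
theorem stmt6 (d k : ℕ) (Ω : Set (EuclideanSpace ℝ (Fin d)))
    (hΩmeas : MeasurableSet Ω) (hΩbdd : Bornology.IsBounded Ω)
    (z : ℕ → EuclideanSpace ℝ (Fin d) → EuclideanSpace ℝ (Fin k))
    (hzmeas : ∀ n, AEStronglyMeasurable (z n) (volume.restrict Ω))
    (hzint : ∀ n, IntegrableOn (fun x => ‖z n x‖ ^ 2) Ω)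
    (hunif : ∀ ε > (0:ℝ), ∃ δ > (0:ℝ), ∀ E ⊆ Ω, MeasurableSet E →
      volume E < ENNReal.ofReal δ → ∀ n, ∫ x in E, ‖z n x‖ ^ 2 < ε)
    (M : ℝ) (hzbdd : ∀ n, ∫ x in Ω, ‖z n x‖ ^ 2 ≤ M)
    (α : ℕ → ℝ) (hαpos : ∀ n, 0 < α n) (hα : Tendsto α atTop (nhds 0))
    (R : ℝ) (hRbdd : ∀ n, ∀ᵐ x ∂(volume.restrict Ω), ‖α n • z n x‖ ≤ R)
    (U : EuclideanSpace ℝ (Fin k) → ℝ) (hU : Continuous U) (hU0 : U 0 = 0) :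
    Tendsto (fun n => ∫ x in Ω, |U (α n • z n x)| * ‖z n x‖ ^ 2) atTop (nhds 0) := by
  have hΩfin : volume Ω < ⊤ := hΩbdd.measure_lt_top
  -- measurable representatives
  set g : ℕ → EuclideanSpace ℝ (Fin d) → EuclideanSpace ℝ (Fin k) :=
    fun n => (hzmeas n).mk (z n) with hgdef
  have hgeq : ∀ n, z n =ᵐ[volume.restrict Ω] g n := fun n => (hzmeas n).ae_eq_mk
  have hgm : ∀ n, StronglyMeasurable (g n) := fun n => (hzmeas n).stronglyMeasurable_mk
  -- bound for U on the ball of radius R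
  obtain ⟨C, hC⟩ := (isCompact_closedBall (0 : EuclideanSpace ℝ (Fin k)) R).exists_bound_of_continuousOn hU.continuousOn
  set C' : ℝ := max C 1 with hC'def
  have hC'pos : (0:ℝ) < C' := lt_of_lt_of_le one_pos (le_max_right _ _)
  have hCball : ∀ y : EuclideanSpace ℝ (Fin k), ‖y‖ ≤ R → |U y| ≤ C' := by
    intro y hy
    have hmem : y ∈ Metric.closedBall (0 : EuclideanSpace ℝ (Fin k)) R := by
      simpa [Metric.mem_closedBall, dist_zero_right] using hy
    calc |U y| = ‖U y‖ := (Real.norm_eq_abs _).symm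
      _ ≤ C := hC y hmem
      _ ≤ C' := le_max_left _ _
  have hUbd : ∀ n, ∀ᵐ x ∂(volume.restrict Ω), |U (α n • z n x)| ≤ C' :=
    fun n => (hRbdd n).mono fun x hx => hCball _ hx
  -- the integrand is integrable on Ω
  have hfmeas : ∀ n, AEStronglyMeasurable
      (fun x => |U (α n • z n x)| * ‖z n x‖ ^ 2) (volume.restrict Ω) := by
    intro n
    have h1 : AEStronglyMeasurable (fun x => α n • z n x) (volume.restrict Ω) :=
      (hzmeas n).const_smul (α n)
    exact ((hU.comp_aestronglyMeasurable h1).norm.congr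
      (Eventually.of_forall fun x => (Real.norm_eq_abs _))).mul
      (((hzmeas n).norm.pow 2))
  have hfint : ∀ n, IntegrableOn
      (fun x => |U (α n • z n x)| * ‖z n x‖ ^ 2) Ω := by
    intro n
    refine Integrable.mono' ((hzint n).const_mul C') (hfmeas n) ?_
    filter_upwards [hUbd n] with x hx
    have : |U (α n • z n x)| * ‖z n x‖ ^ 2 ≤ C' * ‖z n x‖ ^ 2 :=
      mul_le_mul_of_nonneg_right hx (sq_nonneg _)
    have hnn : (0:ℝ) ≤ |U (α n • z n x)| * ‖z n x‖ ^ 2 := mul_nonneg (abs_nonneg _) (sq_nonneg _)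
    rw [Real.norm_eq_abs, abs_of_nonneg hnn]
    exact this
  have hM0 : (0:ℝ) ≤ max M 0 := le_max_right _ _
  set M₀ : ℝ := max M 0 with hM0def
  have hzleM0 : ∀ n, ∫ x in Ω, ‖z n x‖ ^ 2 ≤ M₀ := fun n => (hzbdd n).trans (le_max_left _ _)
  rw [Metric.tendsto_atTop]
  intro ε hε
  set ε₂ : ℝ := ε / (2 * (M₀ + 1)) with hε₂def
  have hM01 : (0:ℝ) < M₀ + 1 := by linarith
  have hε₂pos : 0 < ε₂ := div_pos hε (by linarith)
  -- continuity at 0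
  have hcont : Tendsto U (nhds 0) (nhds 0) := by
    have h := hU.tendsto (0 : EuclideanSpace ℝ (Fin k))
    rwa [hU0] at h
  have hev : ∀ᶠ y in nhds (0 : EuclideanSpace ℝ (Fin k)), |U y| < ε₂ := by
    have h' : ∀ᶠ w in nhds (0:ℝ), |w| < ε₂ := by
      simpa using eventually_abs_sub_lt (0:ℝ) hε₂pos
    exact Tendsto.eventually (p := fun w => |w| < ε₂) hcont h'
  obtain ⟨η, hηpos, hη⟩ := Metric.eventually_nhds_iff.mp hev
  have hηU : ∀ y : EuclideanSpace ℝ (Fin k), ‖y‖ < η → |U y| < ε₂ := by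
    intro y hy
    exact hη (by simpa [dist_zero_right] using hy)
  -- uniform integrability
  set ε₁ : ℝ := ε / (2 * C') with hε₁def
  have hε₁pos : 0 < ε₁ := div_pos hε (by positivity)
  obtain ⟨δ, hδpos, hδ⟩ := hunif ε₁ hε₁pos
  -- threshold on α
  set t : ℝ := Real.sqrt (δ * η ^ 2 / (M₀ + 1)) with htdef
  have htpos : 0 < t := Real.sqrt_pos.mpr (by positivity)
  obtain ⟨N, hN⟩ := (Metric.tendsto_atTop.mp hα t htpos)
  refine ⟨N, fun n hn => ?_⟩
  have hαlt : α n < t := by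
    have := hN n hn
    rw [Real.dist_eq, sub_zero, abs_of_pos (hαpos n)] at this
    exact this
  -- the bad set
  set A : Set (EuclideanSpace ℝ (Fin d)) := {x | η / α n ≤ ‖g n x‖} with hAdef
  have hAmeas : MeasurableSet A := measurableSet_le measurable_const (hgm n).measurable.norm
  set E : Set (EuclideanSpace ℝ (Fin d)) := Ω ∩ A with hEdef
  have hEmeas : MeasurableSet E := hΩmeas.inter hAmeas
  have hEsub : E ⊆ Ω := Set.inter_subset_left
  have hEfin : volume E ≠ ⊤ := ((measure_mono hEsub).trans_lt hΩfin).ne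
  -- ∫ over E of ‖z‖² equals ∫ over E of ‖g‖²
  have hzgE : ∀ᵐ x ∂(volume.restrict E), z n x = g n x :=
    ae_restrict_of_ae_restrict_of_subset hEsub (hgeq n)
  have hintE : IntegrableOn (fun x => ‖z n x‖ ^ 2) E := (hzint n).mono_set hEsub
  have hEeq : ∫ x in E, ‖g n x‖ ^ 2 = ∫ x in E, ‖z n x‖ ^ 2 :=
    integral_congr_ae (hzgE.mono fun x hx => by dsimp only; rw [hx])
  -- Chebyshev
  have hcheb : (η / α n) ^ 2 * (volume E).toReal ≤ ∫ x in E, ‖g n x‖ ^ 2 := by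
    refine setIntegral_ge_of_const_le_real hEmeas hEfin (fun x hx => ?_) ?_
    · have hx' : η / α n ≤ ‖g n x‖ := hx.2
      have h0 : 0 ≤ η / α n := le_of_lt (div_pos hηpos (hαpos n))
      exact pow_le_pow_left₀ h0 hx' 2
    · exact (hintE.congr_fun_ae (hzgE.mono fun x hx => by dsimp only; rw [hx]))
  have hEle : ∫ x in E, ‖z n x‖ ^ 2 ≤ M₀ := by
    refine le_trans ?_ (hzleM0 n)
    refine setIntegral_mono_set (hzint n) ?_ (HasSubset.Subset.eventuallyLE hEsub)
    exact Eventually.of_forall fun x => sq_nonneg _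
  have hEvol : (volume E).toReal < δ := by
    have ha : (0:ℝ) < (α n) ^ 2 := pow_pos (hαpos n) 2
    have h1 : (η / α n) ^ 2 * (volume E).toReal ≤ M₀ := (hcheb.trans_eq hEeq).trans hEle
    rw [div_pow, div_mul_eq_mul_div, div_le_iff₀ ha] at h1
    have h6 : (α n) ^ 2 * (M₀ + 1) < δ * η ^ 2 := by
      have hα2 : (α n) ^ 2 < δ * η ^ 2 / (M₀ + 1) := by
        have hsq := Real.sq_sqrt (le_of_lt (show (0:ℝ) < δ * η ^ 2 / (M₀ + 1) by positivity))
        calc (α n) ^ 2 < t ^ 2 := pow_lt_pow_left₀ hαlt (le_of_lt (hαpos n)) (by norm_num)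
          _ = δ * η ^ 2 / (M₀ + 1) := hsq
      exact (lt_div_iff₀ hM01).mp hα2
    by_contra hcon
    push_neg at hcon
    have h7 : η ^ 2 * δ ≤ η ^ 2 * (volume E).toReal :=
      mul_le_mul_of_nonneg_left hcon (sq_nonneg η)
    nlinarith
  have hEvol' : volume E < ENNReal.ofReal δ := by
    rw [← ENNReal.ofReal_toReal hEfin]
    exact ENNReal.ofReal_lt_ofReal_iff hδpos |>.mpr hEvol
  -- piece 1: over E
  have hfintE : IntegrableOn (fun x => |U (α n • z n x)| * ‖z n x‖ ^ 2) E :=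
    (hfint n).mono_set hEsub
  have hp1 : ∫ x in E, |U (α n • z n x)| * ‖z n x‖ ^ 2 < ε / 2 := by
    have hb : ∫ x in E, |U (α n • z n x)| * ‖z n x‖ ^ 2 ≤ C' * ∫ x in E, ‖z n x‖ ^ 2 := by
      rw [← integral_const_mul]
      refine integral_mono_ae hfintE (hintE.const_mul C') ?_
      filter_upwards [ae_restrict_of_ae_restrict_of_subset hEsub (hUbd n)] with x hx
      exact mul_le_mul_of_nonneg_right hx (sq_nonneg _)
    have hu : ∫ x in E, ‖z n x‖ ^ 2 < ε₁ := hδ E hEsub hEmeas hEvol' n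
    calc ∫ x in E, |U (α n • z n x)| * ‖z n x‖ ^ 2 ≤ C' * ∫ x in E, ‖z n x‖ ^ 2 := hb
      _ < C' * ε₁ := by exact mul_lt_mul_of_pos_left hu hC'pos
      _ = ε / 2 := by rw [hε₁def]; field_simp
  -- piece 2: over Ω \ A
  have hDsub : Ω \ A ⊆ Ω := Set.diff_subset
  have hDmeas : MeasurableSet (Ω \ A) := hΩmeas.diff hAmeas
  have hintD : IntegrableOn (fun x => ‖z n x‖ ^ 2) (Ω \ A) := (hzint n).mono_set hDsub
  have hp2 : ∫ x in Ω \ A, |U (α n • z n x)| * ‖z n x‖ ^ 2 ≤ ε / 2 := by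
    have hb : ∫ x in Ω \ A, |U (α n • z n x)| * ‖z n x‖ ^ 2 ≤ ε₂ * ∫ x in Ω \ A, ‖z n x‖ ^ 2 := by
      rw [← integral_const_mul]
      refine integral_mono_ae ((hfint n).mono_set hDsub) (hintD.const_mul ε₂) ?_
      filter_upwards [ae_restrict_of_ae_restrict_of_subset hDsub (hgeq n),
        ae_restrict_mem hDmeas] with x hzg hxmem
      have hxA : x ∉ A := hxmem.2
      have hlt : ‖g n x‖ < η / α n := lt_of_not_ge hxA
      have hnorm : ‖α n • z n x‖ < η := by
        rw [norm_smul, Real.norm_eq_abs, abs_of_pos (hαpos n), hzg]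
        calc α n * ‖g n x‖ < α n * (η / α n) := by
              exact mul_lt_mul_of_pos_left hlt (hαpos n)
          _ = η := by rw [mul_comm, div_mul_cancel₀ η (ne_of_gt (hαpos n))]
      exact mul_le_mul_of_nonneg_right (le_of_lt (hηU _ hnorm)) (sq_nonneg _)
    have hDle : ∫ x in Ω \ A, ‖z n x‖ ^ 2 ≤ M₀ := by
      refine le_trans ?_ (hzleM0 n)
      refine setIntegral_mono_set (hzint n) (Eventually.of_forall fun x => sq_nonneg _)
        (HasSubset.Subset.eventuallyLE hDsub)
    calc ∫ x in Ω \ A, |U (α n • z n x)| * ‖z n x‖ ^ 2 ≤ ε₂ * ∫ x in Ω \ A, ‖z n x‖ ^ 2 := hb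
      _ ≤ ε₂ * M₀ := mul_le_mul_of_nonneg_left hDle (le_of_lt hε₂pos)
      _ ≤ ε₂ * (M₀ + 1) := by nlinarith
      _ = ε / 2 := by rw [hε₂def]; field_simp
  -- combine
  have hsplit : (∫ x in Ω ∩ A, |U (α n • z n x)| * ‖z n x‖ ^ 2)
      + (∫ x in Ω \ A, |U (α n • z n x)| * ‖z n x‖ ^ 2)
      = ∫ x in Ω, |U (α n • z n x)| * ‖z n x‖ ^ 2 :=
    integral_inter_add_diff hAmeas (hfint n)
  have hnonneg : 0 ≤ ∫ x in Ω, |U (α n • z n x)| * ‖z n x‖ ^ 2 :=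
    integral_nonneg fun x => mul_nonneg (abs_nonneg _) (sq_nonneg _)
  rw [Real.dist_eq, sub_zero, abs_of_nonneg hnonneg]
  have : ∫ x in Ω, |U (α n • z n x)| * ‖z n x‖ ^ 2 < ε / 2 + ε / 2 := by
    rw [← hsplit]
    exact add_lt_add_of_lt_of_le hp1 hp2
  linarith
end

section
/- Let f_n : [0,1] → ℝ be the sequence of Lipschitz functions with f_n(0) = 0 and derivative f_n'(x) = n/√2 when x ∈ [k/(n+1) − 1/n³, k/(n+1) + 1/n³] for some k ∈ {0,1,…,n}, and f_n'(x) = 0 otherwise. Then: (a) ∫_0^1 (f_n'(x))² dx → 1 as n → ∞; (b) for every ε > 0, the measure of the set {x ∈ [0,1] : |f_n'(x)| > ε} tends to 0 as n → ∞, hence f_n' → 0 in measure and the Young measure generated by (f_n') is the Dirac mass at 0. -/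
open MeasureTheory Filter

/-- The derivative `f_n'` in the Ball–Murat-type example of Section 7:
`f_n'(x) = n/√2` on the intervals `[k/(n+1) − 1/n³, k/(n+1) + 1/n³]`,
`k = 0, …, n`, and `0` otherwise. -/
noncomputable def ballMuratDeriv (n : ℕ) (x : ℝ) : ℝ :=
  open Classical in
  if ∃ k : ℕ, k ≤ n ∧ |x - (k : ℝ) / ((n : ℝ) + 1)| ≤ 1 / (n : ℝ) ^ 3 then
    (n : ℝ) / Real.sqrt 2
  else 0

namespace BMaux

/-- The support set of `ballMuratDeriv n`. -/
def A (n : ℕ) : Set ℝ :=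
  {x | ∃ k : ℕ, k ≤ n ∧ |x - (k : ℝ) / ((n : ℝ) + 1)| ≤ 1 / (n : ℝ) ^ 3}

/-- The `k`-th interval. -/
def J (n k : ℕ) : Set ℝ :=
  Set.Icc ((k : ℝ) / ((n : ℝ) + 1) - 1 / (n : ℝ) ^ 3)
          ((k : ℝ) / ((n : ℝ) + 1) + 1 / (n : ℝ) ^ 3)

lemma A_eq (n : ℕ) : A n = ⋃ k ∈ Finset.range (n + 1), J n k := by
  ext x
  simp only [A, J, Set.mem_setOf_eq, Set.mem_iUnion, Finset.mem_range, Set.mem_Icc,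
    Nat.lt_succ_iff, abs_le]
  constructor
  · rintro ⟨k, hk, h1, h2⟩; exact ⟨k, hk, by linarith, by linarith⟩
  · rintro ⟨k, hk, h1, h2⟩; exact ⟨k, hk, by linarith, by linarith⟩

lemma measurableSet_A (n : ℕ) : MeasurableSet (A n) := by
  rw [A_eq]
  exact Finset.measurableSet_biUnion _ fun k _ => measurableSet_Icc

lemma deriv_eq (n : ℕ) (x : ℝ) :
    ballMuratDeriv n x = (A n).indicator (fun _ => (n : ℝ) / Real.sqrt 2) x := by
  classical
  simp only [ballMuratDeriv, Set.indicator_apply, A, Set.mem_setOf_eq]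

lemma sq_deriv_eq (n : ℕ) (x : ℝ) :
    (ballMuratDeriv n x) ^ 2 = (A n).indicator (fun _ => (n : ℝ) ^ 2 / 2) x := by
  rw [deriv_eq]
  by_cases hx : x ∈ A n
  · simp only [Set.indicator_of_mem hx]
    rw [div_pow, Real.sq_sqrt (by norm_num : (2:ℝ) ≥ 0)]
  · simp [Set.indicator_of_notMem hx]

lemma two_c_lt_d {n : ℕ} (hn : 2 ≤ n) : 2 / (n : ℝ) ^ 3 < 1 / ((n : ℝ) + 1) := by
  have h2 : (2 : ℝ) ≤ n := by exact_mod_cast hn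
  rw [div_lt_div_iff₀ (by positivity) (by positivity)]
  have ha : 2 * (n:ℝ)^2 ≤ (n:ℝ)^3 := by nlinarith [sq_nonneg ((n:ℝ))]
  have hb : 2 * (n:ℝ) ≤ (n:ℝ)^2 := by nlinarith
  nlinarith

lemma J_disjoint {n : ℕ} (hn : 2 ≤ n) {i j : ℕ} (hij : i < j) :
    Disjoint (J n i) (J n j) := by
  have h2 : (2 : ℝ) ≤ n := by exact_mod_cast hn
  have hij' : (i : ℝ) + 1 ≤ j := by exact_mod_cast hij
  have hd : 2 / (n : ℝ) ^ 3 < 1 / ((n : ℝ) + 1) := two_c_lt_d hn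
  have hstep : (i : ℝ) / ((n : ℝ) + 1) + 1 / ((n : ℝ) + 1) ≤ (j : ℝ) / ((n : ℝ) + 1) := by
    rw [← add_div]
    gcongr
  rw [J, J, Set.disjoint_left]
  intro x hx hx'
  simp only [Set.mem_Icc] at hx hx'
  have := hx.2; have := hx'.1
  have hc : (2 : ℝ) / (n : ℝ) ^ 3 = 1 / (n : ℝ) ^ 3 + 1 / (n : ℝ) ^ 3 := by ring
  linarith [hx.2, hx'.1]

lemma volume_A_inter {n : ℕ} (hn : 2 ≤ n) :
    volume (A n ∩ Set.Icc (0:ℝ) 1) =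
      ENNReal.ofReal ((2 * (n : ℝ) + 1) / (n : ℝ) ^ 3) := by
  have h2 : (2 : ℝ) ≤ n := by exact_mod_cast hn
  have hn1 : (0 : ℝ) < (n : ℝ) + 1 := by positivity
  have hn3 : (0 : ℝ) < (n : ℝ) ^ 3 := by positivity
  have hc_pos : (0 : ℝ) < 1 / (n : ℝ) ^ 3 := by positivity
  have hcd : 2 / (n : ℝ) ^ 3 < 1 / ((n : ℝ) + 1) := two_c_lt_d hn
  have hc_le_d : 1 / (n : ℝ) ^ 3 < 1 / ((n : ℝ) + 1) := by
    have : 1 / (n : ℝ) ^ 3 < 2 / (n : ℝ) ^ 3 := by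
      rw [div_lt_div_iff₀ hn3 hn3]; nlinarith
    linarith
  rw [A_eq, Set.iUnion₂_inter]
  rw [measure_biUnion_finset]
  · -- sum computation
    have hterm : ∀ k ∈ Finset.range (n + 1),
        volume (J n k ∩ Set.Icc (0:ℝ) 1) =
          ENNReal.ofReal (if k = 0 then 1 / (n : ℝ) ^ 3 else 2 / (n : ℝ) ^ 3) := by
      intro k hk
      rw [Finset.mem_range, Nat.lt_succ_iff] at hk
      rcases Nat.eq_zero_or_pos k with rfl | hkpos
      · have hd1 : 1 / ((n : ℝ) + 1) ≤ 1 := by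
          rw [div_le_one hn1]; linarith
        have : J n 0 ∩ Set.Icc (0:ℝ) 1 = Set.Icc 0 (1 / (n : ℝ) ^ 3) := by
          rw [J, Set.Icc_inter_Icc]
          have e0 : ((0:ℕ):ℝ) / ((n:ℝ)+1) = 0 := by simp
          rw [e0, zero_sub, zero_add]
          rw [max_eq_right (by linarith : -(1 / (n:ℝ)^3) ≤ 0),
            min_eq_left (by linarith : 1 / (n:ℝ)^3 ≤ 1)]
        rw [this, Real.volume_Icc]
        simp
      · have hk1 : (1 : ℝ) ≤ k := by exact_mod_cast hkpos
        have hkn : (k : ℝ) ≤ n := by exact_mod_cast hk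
        have hlow : 0 ≤ (k : ℝ) / ((n : ℝ) + 1) - 1 / (n : ℝ) ^ 3 := by
          have h1 : 1 / ((n : ℝ) + 1) ≤ (k : ℝ) / ((n : ℝ) + 1) :=
            by gcongr
          linarith
        have hhigh : (k : ℝ) / ((n : ℝ) + 1) + 1 / (n : ℝ) ^ 3 ≤ 1 := by
          have h1 : (k : ℝ) / ((n : ℝ) + 1) ≤ (n : ℝ) / ((n : ℝ) + 1) :=
            by gcongr
          have h2' : (n : ℝ) / ((n : ℝ) + 1) + 1 / ((n : ℝ) + 1) = 1 := by
            field_simp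
          linarith
        have : J n k ∩ Set.Icc (0:ℝ) 1 = J n k := by
          rw [Set.inter_eq_left, J]
          intro x hx
          simp only [Set.mem_Icc] at hx ⊢
          exact ⟨by linarith [hx.1], by linarith [hx.2]⟩
        rw [this, J, Real.volume_Icc]
        rw [if_neg hkpos.ne']
        congr 1; ring
    rw [Finset.sum_congr rfl hterm]
    rw [← ENNReal.ofReal_sum_of_nonneg]
    · congr 1
      rw [Finset.sum_range_succ']
      have : ∀ i ∈ Finset.range n,
          (if i + 1 = 0 then 1 / (n:ℝ)^3 else 2 / (n:ℝ)^3) = 2 / (n:ℝ)^3 := by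
        intro i _; rw [if_neg (Nat.succ_ne_zero i)]
      rw [Finset.sum_congr rfl this, Finset.sum_const, Finset.card_range,
        if_pos rfl, nsmul_eq_mul]
      have hn0 : (n:ℝ) ≠ 0 := by positivity
      field_simp
    · intro k _
      split <;> positivity
  · intro i hi j hj hij
    rcases lt_or_gt_of_ne hij with h | h
    · exact (J_disjoint hn h).mono Set.inter_subset_left Set.inter_subset_left
    · exact ((J_disjoint hn h).symm).mono Set.inter_subset_left Set.inter_subset_left
  · exact fun k _ => (measurableSet_Icc).inter measurableSet_Icc

end BMaux

/-- (a) `∫_0^1 (f_n')² dx → 1`; (b) for every `ε > 0`,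
`|{x ∈ [0,1] : |f_n'(x)| > ε}| → 0`, i.e. `f_n' → 0` in measure (so the Young
measure generated by `(f_n')` is the Dirac mass at `0`). -/
theorem stmt13 :
    Tendsto (fun n => ∫ x in Set.Icc (0:ℝ) 1, (ballMuratDeriv n x) ^ 2) atTop (nhds 1) ∧
    ∀ ε > (0:ℝ),
      Tendsto (fun n => volume {x ∈ Set.Icc (0:ℝ) 1 | ε < |ballMuratDeriv n x|})
        atTop (nhds 0) := by
  constructor
  · -- (a)
    have key : ∀ n : ℕ, 2 ≤ n →
        (∫ x in Set.Icc (0:ℝ) 1, (ballMuratDeriv n x) ^ 2)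
          = 1 + (1 / 2) * (1 / (n : ℝ)) := by
      intro n hn
      have hn0 : (n : ℝ) ≠ 0 := by
        exact_mod_cast Nat.one_le_iff_ne_zero.mp (le_trans (by norm_num) hn)
      simp only [BMaux.sq_deriv_eq]
      rw [MeasureTheory.setIntegral_indicator (BMaux.measurableSet_A n),
        MeasureTheory.setIntegral_const, measureReal_def, Set.inter_comm, BMaux.volume_A_inter hn, smul_eq_mul,
        ENNReal.toReal_ofReal (by positivity)]
      field_simp
    have hlim : Tendsto (fun n : ℕ => 1 + (1 / 2) * (1 / (n : ℝ))) atTop (nhds 1) := by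
      have h := (tendsto_const_nhds (x := (1:ℝ)) (f := atTop (α := ℕ))).add
        (tendsto_one_div_atTop_nhds_zero_nat.const_mul (1 / 2 : ℝ))
      simpa using h
    refine Tendsto.congr' ?_ hlim
    filter_upwards [eventually_ge_atTop 2] with n hn using (key n hn).symm
  · -- (b)
    intro ε hε
    have hbound : ∀ n : ℕ, 2 ≤ n →
        volume {x ∈ Set.Icc (0:ℝ) 1 | ε < |ballMuratDeriv n x|}
          ≤ ENNReal.ofReal ((2 * (n : ℝ) + 1) / (n : ℝ) ^ 3) := by
      intro n hn
      rw [← BMaux.volume_A_inter hn]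
      apply measure_mono
      intro x hx
      obtain ⟨hx1, hx2⟩ := hx
      refine ⟨?_, hx1⟩
      by_contra hxA
      rw [BMaux.deriv_eq n x, Set.indicator_of_notMem hxA] at hx2
      simp only [abs_zero] at hx2
      linarith
    have hto : Tendsto (fun n : ℕ => ENNReal.ofReal ((2 * (n : ℝ) + 1) / (n : ℝ) ^ 3))
        atTop (nhds 0) := by
      rw [← ENNReal.ofReal_zero]
      apply ENNReal.tendsto_ofReal
      have h1 : Tendsto (fun n : ℕ => 2 * (1 / (n : ℝ)) ^ 2 + (1 / (n : ℝ)) ^ 3)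
          atTop (nhds (2 * 0 ^ 2 + 0 ^ 3)) :=
        ((tendsto_one_div_atTop_nhds_zero_nat.pow 2).const_mul 2).add
          (tendsto_one_div_atTop_nhds_zero_nat.pow 3)
      norm_num at h1
      refine Tendsto.congr' ?_ h1
      filter_upwards [eventually_ge_atTop 1] with n hn
      have hn0 : (n : ℝ) ≠ 0 := by
        exact_mod_cast Nat.one_le_iff_ne_zero.mp hn
      field_simp
    refine tendsto_of_tendsto_of_tendsto_of_le_of_le' tendsto_const_nhds hto
      (Eventually.of_forall fun n => zero_le) ?_
    filter_upwards [eventually_ge_atTop 2] with n hn using hbound n hn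
end
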